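/- Let M be a closed topological n-manifold and let f be a topological flow on M whose chain recurrent set R_f is finite and consists of topologically hyperbolic fixed points, enumerated p_1, …, p_k so that whenever W^s_{p_i} ∩ W^u_{p_j} ≠ ∅ and i ≠ j one has i < j. Then for every i, cl(W^u_{p_i}) \ (W^u_{p_i} ∪ {p_i}) ⊆ ⋃_{j=1}^{i−1} W^u_{p_j}, and cl(W^s_{p_i}) \ (W^s_{p_i} ∪ {p_i}) ⊆ ⋃_{j=i+1}^{k} W^s_{p_j}, where cl denotes topological closure in M. -/

import Mathlib

open Filter Topology Set

/-- The model linear flow `a^t_λ` on `ℝ^n`. -/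
noncomputable def modelFlow (n lam : ℕ) (t : ℝ) (x : Fin n → ℝ) : Fin n → ℝ :=
  fun i => if (i : ℕ) < lam then (2 : ℝ) ^ t * x i else (2 : ℝ) ^ (-t) * x i

/-- An `ε`-chain of length `T` from `x` to `y` for the flow `f`. -/
def IsEpsChain {M : Type*} [MetricSpace M] (f : ℝ → M → M) (ε T : ℝ) (x y : M) : Prop :=
  ∃ (m : ℕ) (xs : ℕ → M) (ts : ℕ → ℝ), 0 < m ∧ xs 0 = x ∧ xs m = y ∧
    (∀ i ∈ Finset.Icc 1 m, 1 ≤ ts i ∧ dist (f (ts i) (xs (i - 1))) (xs i) < ε) ∧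
    ∑ i ∈ Finset.Icc 1 m, ts i = T

/-- A point is chain recurrent if for every `ε > 0` there is an `ε`-chain of some
length `T` from the point to itself. -/
def IsChainRecurrent {M : Type*} [MetricSpace M] (f : ℝ → M → M) (x : M) : Prop :=
  ∀ ε > 0, ∃ T > 0, IsEpsChain f ε T x x

/-- The stable manifold `W^s_p`. -/
def stableSet {M : Type*} [TopologicalSpace M] (f : ℝ → M → M) (p : M) : Set M :=
  {y | Tendsto (fun t : ℝ => f t y) atTop (nhds p)}

/-- The unstable manifold `W^u_p`. -/
def unstableSet {M : Type*} [TopologicalSpace M] (f : ℝ → M → M) (p : M) : Set M :=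
  {y | Tendsto (fun t : ℝ => f (-t) y) atTop (nhds p)}

/-- `p` is a topologically hyperbolic fixed point of index `lam` of the flow `f`. -/
def IsTopHyperbolicFixedPt {M : Type*} [TopologicalSpace M] (n : ℕ) (f : ℝ → M → M)
    (p : M) (lam : ℕ) : Prop :=
  lam ≤ n ∧ (∀ t : ℝ, f t p = p) ∧
  ∃ (U : Set M) (_ : IsOpen U) (hp : p ∈ U) (h : U ≃ₜ (Fin n → ℝ)),
    h ⟨p, hp⟩ = 0 ∧
    ∀ (t : ℝ) (y : M) (hy : y ∈ U) (hfy : ∀ s ∈ Set.uIcc (0 : ℝ) t, f s y ∈ U),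
      (h ⟨f t y, hfy t Set.right_mem_uIcc⟩ : Fin n → ℝ) = modelFlow n lam t (h ⟨y, hy⟩)

/-- `p` is a regular point of `φ` (in the sense of continuous Morse theory). -/
def IsRegularPoint {M : Type*} [TopologicalSpace M] (n : ℕ) (φ : M → ℝ) (p : M) : Prop :=
  ∃ (V : Set M) (_ : IsOpen V) (hp : p ∈ V) (ψ : V ≃ₜ (Fin n → ℝ)) (j : Fin n),
    (j : ℕ) + 1 = n ∧ ψ ⟨p, hp⟩ = 0 ∧ ∀ y : V, φ y = φ p + ψ y j

/-- `p` is a non-degenerate critical point of `φ` of index `ν`. -/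
def IsNondegenerateCriticalPoint {M : Type*} [TopologicalSpace M] (n : ℕ) (φ : M → ℝ)
    (p : M) (ν : ℕ) : Prop :=
  ν ≤ n ∧ ¬ IsRegularPoint n φ p ∧
  ∃ (V : Set M) (_ : IsOpen V) (hp : p ∈ V) (ψ : V ≃ₜ (Fin n → ℝ)),
    ψ ⟨p, hp⟩ = 0 ∧
    ∀ y : V, φ y = φ p
      - ∑ i ∈ Finset.univ.filter (fun i : Fin n => (i : ℕ) < ν), (ψ y i) ^ 2
      + ∑ i ∈ Finset.univ.filter (fun i : Fin n => ν ≤ (i : ℕ)), (ψ y i) ^ 2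

/-- `M` is locally Euclidean of dimension `n` (every point has a neighborhood
homeomorphic to `ℝ^n`). -/
def LocallyEuclidean (n : ℕ) (M : Type*) [TopologicalSpace M] : Prop :=
  ∀ p : M, ∃ U : Set M, IsOpen U ∧ p ∈ U ∧ Nonempty (U ≃ₜ (Fin n → ℝ))


section Curve
variable {M : Type*} [MetricSpace M] [CompactSpace M]

lemma mapClusterPt_of_subseq {γ : ℝ → M} {v : ℕ → ℝ}
    (hv : Tendsto v atTop atTop) {a : M} (h : Tendsto (fun n => γ (v n)) atTop (𝓝 a)) :
    MapClusterPt a atTop γ := by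
  rw [mapClusterPt_iff_frequently]
  intro s hs
  rw [frequently_atTop]
  intro T
  have h1 : ∀ᶠ n in atTop, γ (v n) ∈ s := h hs
  have h2 : ∀ᶠ n in atTop, v n ≥ T := hv (eventually_ge_atTop T)
  obtain ⟨n, hn1, hn2⟩ := (h1.and h2).exists
  exact ⟨v n, hn2, hn1⟩

lemma mapClusterPt_freq {γ : ℝ → M} {z : M} (h : MapClusterPt z atTop γ)
    {ε : ℝ} (hε : 0 < ε) (T : ℝ) : ∃ t ≥ T, dist (γ t) z < ε := by
  rw [mapClusterPt_iff_frequently] at h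
  have := h (Metric.ball z ε) (Metric.ball_mem_nhds z hε)
  rw [frequently_atTop] at this
  obtain ⟨t, ht, ht2⟩ := this T
  exact ⟨t, ht, ht2⟩

lemma exists_mapClusterPt (γ : ℝ → M) : ∃ z, MapClusterPt z atTop γ :=
  exists_clusterPt_of_compactSpace (map γ atTop)

lemma tendsto_of_unique_clusterPt {γ : ℝ → M} {z : M}
    (h : ∀ a, MapClusterPt a atTop γ → a = z) : Tendsto γ atTop (𝓝 z) := by
  rw [Metric.tendsto_nhds]
  by_contra hc
  push_neg at hc
  obtain ⟨ε, hε, hfreq⟩ := hc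
  replace hfreq : ∃ᶠ x in atTop, ¬ dist (γ x) z < ε := hfreq.mono fun t ht => not_lt.2 ht
  have hsel : ∀ n : ℕ, ∃ t ≥ (n : ℝ), ¬ dist (γ t) z < ε := by
    intro n
    rw [frequently_atTop] at hfreq
    exact hfreq n
  choose v hv1 hv2 using hsel
  have hvtop : Tendsto v atTop atTop :=
    tendsto_atTop_mono hv1 tendsto_natCast_atTop_atTop
  obtain ⟨a, _, φ, hφ, hconv⟩ := IsCompact.tendsto_subseq (x := fun n => γ (v n))
    isCompact_univ (fun n => mem_univ _)
  have ha : MapClusterPt a atTop γ :=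
    mapClusterPt_of_subseq (hvtop.comp hφ.tendsto_atTop) hconv
  have haz := h a ha
  subst haz
  have : ∀ n, ε ≤ dist (γ (v (φ n))) a := fun n => not_lt.mp (hv2 (φ n))
  have hd : Tendsto (fun n => dist (γ (v (φ n))) a) atTop (𝓝 (dist a a)) :=
    hconv.dist tendsto_const_nhds
  rw [dist_self] at hd
  have := ge_of_tendsto hd (Eventually.of_forall this)
  linarith

lemma curve_tendsto {γ : ℝ → M} (hγ : Continuous γ) {P : Set M} (hP : P.Finite)
    (hcl : ∀ z, MapClusterPt z atTop γ → z ∈ P) :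
    ∃ z ∈ P, Tendsto γ atTop (𝓝 z) := by
  classical
  obtain ⟨z, hz⟩ := exists_mapClusterPt γ
  refine ⟨z, hcl z hz, tendsto_of_unique_clusterPt ?_⟩
  intro a ha
  by_contra hne
  -- a, z ∈ P, a ≠ z
  have haP := hcl a ha
  have hzP := hcl z hz
  set Q : Finset ℝ := (hP.toFinset.erase z).image (dist z) with hQ
  have hQne : Q.Nonempty := ⟨dist z a, Finset.mem_image.2 ⟨a,
    Finset.mem_erase.2 ⟨hne, hP.mem_toFinset.2 haP⟩, rfl⟩⟩
  set r : ℝ := Q.min' hQne with hr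
  have hrpos : 0 < r := by
    have := Q.min'_mem hQne
    rw [← hr] at this
    obtain ⟨w, hw, hwd⟩ := Finset.mem_image.1 this
    have hwz : w ≠ z := (Finset.mem_erase.1 hw).1
    rw [← hwd]
    exact dist_pos.2 (Ne.symm hwz)
  -- frequently the curve is on the sphere of radius r/2 around z
  have hfreq : ∀ n : ℕ, ∃ t ≥ (n : ℝ), dist (γ t) z = r / 2 := by
    intro n
    obtain ⟨t1, ht1, ht1d⟩ := mapClusterPt_freq hz (by linarith : (0:ℝ) < r/4) n
    obtain ⟨t2, ht2, ht2d⟩ := mapClusterPt_freq ha (by linarith : (0:ℝ) < r/4) t1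
    have hdza : r ≤ dist z a := Finset.min'_le _ _ (Finset.mem_image.2 ⟨a,
      Finset.mem_erase.2 ⟨hne, hP.mem_toFinset.2 haP⟩, rfl⟩)
    have h2 : r / 2 < dist (γ t2) z := by
      have htri : dist z a ≤ dist z (γ t2) + dist (γ t2) a := dist_triangle z (γ t2) a
      rw [dist_comm z (γ t2)] at htri
      linarith [hdza, htri, ht2d]
    have hIVT := intermediate_value_Icc ht2 ((continuous_dist.comp (hγ.prodMk continuous_const)).continuousOn
      : ContinuousOn (fun t => dist (γ t) z) (Icc t1 t2))
    have hmem : r/2 ∈ Icc (dist (γ t1) z) (dist (γ t2) z) := ⟨by linarith, le_of_lt h2⟩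
    obtain ⟨t, ht, htd⟩ := hIVT hmem
    exact ⟨t, le_trans ht1 ht.1, htd⟩
  choose v hv1 hv2 using hfreq
  have hvtop : Tendsto v atTop atTop :=
    tendsto_atTop_mono hv1 tendsto_natCast_atTop_atTop
  obtain ⟨b, _, φ, hφ, hconv⟩ := IsCompact.tendsto_subseq (x := fun n => γ (v n))
    isCompact_univ (fun n => mem_univ _)
  have hb : MapClusterPt b atTop γ :=
    mapClusterPt_of_subseq (hvtop.comp hφ.tendsto_atTop) hconv
  have hbP := hcl b hb
  have hbd : dist b z = r / 2 := by
    have : Tendsto (fun n => dist (γ (v (φ n))) z) atTop (𝓝 (dist b z)) :=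
      hconv.dist tendsto_const_nhds
    have heq : (fun n => dist (γ (v (φ n))) z) = fun _ => r / 2 := funext fun n => hv2 (φ n)
    rw [heq] at this
    exact (tendsto_nhds_unique tendsto_const_nhds this).symm
  have hbz : b ≠ z := by
    intro hbz; rw [hbz, dist_self] at hbd; linarith
  have : r ≤ dist z b := Finset.min'_le _ _ (Finset.mem_image.2 ⟨b,
    Finset.mem_erase.2 ⟨hbz, hP.mem_toFinset.2 hbP⟩, rfl⟩)
  rw [dist_comm] at hbd
  linarith

end Curve
section Chains
variable {M : Type*} [MetricSpace M] [CompactSpace M] {f : ℝ → M → M}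

lemma icc13 : (Finset.Icc 1 3 : Finset ℕ) = {1, 2, 3} := by decide

lemma chain_of_passes (hf_add : ∀ s t : ℝ, ∀ x, f t (f s x) = f (t + s) x)
    {ε δ : ℝ} (hε : 0 < ε)
    (hδ : ∀ c d : M, dist c d < δ → dist (f 1 c) (f 1 d) < ε)
    {x z : M} {a b : ℝ} (hab : a + 3 ≤ b)
    (hda : dist (f a x) z < δ) (hdb : dist (f b x) z < ε) :
    ∃ T > 0, IsEpsChain f ε T z z := by
  refine ⟨b - a, by linarith, 3,
    (fun i => if i = 0 then z else if i = 1 then f (a+1) x else if i = 2 then f (b-1) x else z),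
    (fun i => if i = 2 then b - a - 2 else 1), by norm_num, rfl, rfl, ?_, ?_⟩
  · intro i hi
    rw [icc13] at hi
    fin_cases hi
    · refine ⟨by norm_num, ?_⟩
      simp only [if_neg, if_pos]
      norm_num
      have h1 : dist (f 1 (f a x)) (f 1 z) < ε := hδ _ _ hda
      rw [hf_add a 1 x] at h1
      rw [show (1:ℝ) + a = a + 1 by ring] at h1
      rw [dist_comm]
      exact h1
    · refine ⟨by norm_num; linarith, ?_⟩
      norm_num
      rw [hf_add (a+1) (b-a-2) x, show b - a - 2 + (a + 1) = b - 1 by ring]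
      simpa using hε
    · refine ⟨by norm_num, ?_⟩
      norm_num
      rw [hf_add (b-1) 1 x, show (1:ℝ) + (b - 1) = b by ring]
      exact hdb
  · rw [icc13]
    norm_num
    ring

lemma uc_time_one (hf_cont : Continuous fun q : ℝ × M => f q.1 q.2)
    {ε : ℝ} (hε : 0 < ε) :
    ∃ δ > 0, ∀ c d : M, dist c d < δ → dist (f 1 c) (f 1 d) < ε := by
  have hc : Continuous (fun y : M => f 1 y) :=
    hf_cont.comp (continuous_const.prodMk continuous_id)
  have := CompactSpace.uniformContinuous_of_continuous hc
  rw [Metric.uniformContinuous_iff] at this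
  obtain ⟨δ, hδ, h⟩ := this ε hε
  exact ⟨δ, hδ, fun c d hcd => h hcd⟩

lemma fwd_clusterPt_chainRecurrent (hf_cont : Continuous fun q : ℝ × M => f q.1 q.2)
    (hf_add : ∀ s t : ℝ, ∀ x, f t (f s x) = f (t + s) x)
    {x z : M} (hz : MapClusterPt z atTop (fun t => f t x)) : IsChainRecurrent f z := by
  intro ε hε
  obtain ⟨δ, hδpos, hδ⟩ := uc_time_one hf_cont hε
  have hδ' : 0 < min δ ε := lt_min hδpos hε
  obtain ⟨a, _, hda⟩ := mapClusterPt_freq hz hδ' 0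
  obtain ⟨b, hb, hdb⟩ := mapClusterPt_freq hz hδ' (a + 3)
  exact chain_of_passes hf_add hε hδ hb
    (lt_of_lt_of_le hda (min_le_left _ _)) (lt_of_lt_of_le hdb (min_le_right _ _))

lemma bwd_clusterPt_chainRecurrent (hf_cont : Continuous fun q : ℝ × M => f q.1 q.2)
    (hf_add : ∀ s t : ℝ, ∀ x, f t (f s x) = f (t + s) x)
    {x z : M} (hz : MapClusterPt z atTop (fun t => f (-t) x)) : IsChainRecurrent f z := by
  intro ε hε
  obtain ⟨δ, hδpos, hδ⟩ := uc_time_one hf_cont hε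
  have hδ' : 0 < min δ ε := lt_min hδpos hε
  obtain ⟨t1, _, hd1⟩ := mapClusterPt_freq hz hδ' 0
  obtain ⟨t2, ht2, hd2⟩ := mapClusterPt_freq hz hδ' (t1 + 3)
  refine chain_of_passes hf_add hε hδ (a := -t2) (b := -t1) (by linarith)
    (lt_of_lt_of_le hd2 (min_le_left _ _)) (lt_of_lt_of_le hd1 (min_le_right _ _))

lemma homoclinic_chainRecurrent (hf_zero : ∀ x, f 0 x = x)
    (hf_add : ∀ s t : ℝ, ∀ x, f t (f s x) = f (t + s) x)
    {p q : M} (hs : q ∈ stableSet f p) (hu : q ∈ unstableSet f p) :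
    IsChainRecurrent f q := by
  intro ε hε
  have hε2 : 0 < ε / 2 := by linarith
  rw [stableSet, mem_setOf_eq, Metric.tendsto_atTop] at hs
  rw [unstableSet, mem_setOf_eq, Metric.tendsto_atTop] at hu
  obtain ⟨N1, hN1⟩ := hs (ε/2) hε2
  obtain ⟨N2, hN2⟩ := hu (ε/2) hε2
  set T1 : ℝ := max 1 N1 with hT1
  set T2 : ℝ := max 1 N2 with hT2
  refine ⟨T1 + 1 + T2, by
      have := le_max_left 1 N1; have := le_max_left 1 N2; linarith, 3,
    (fun i => if i = 0 then q else if i = 1 then f T1 q else if i = 2 then f (-T2) q else q),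
    (fun i => if i = 1 then T1 else if i = 2 then 1 else T2), by norm_num, rfl, rfl, ?_, ?_⟩
  · intro i hi
    rw [icc13] at hi
    fin_cases hi
    · refine ⟨le_max_left _ _, ?_⟩
      norm_num
      simpa using hε
    · refine ⟨le_refl _, ?_⟩
      norm_num
      rw [hf_add T1 1 q]
      have h1 : dist (f (1 + T1) q) p < ε/2 := hN1 _ (by have := le_max_right 1 N1; linarith)
      have h2 : dist (f (-T2) q) p < ε/2 := hN2 _ (le_max_right 1 N2)
      calc dist (f (1+T1) q) (f (-T2) q) ≤ dist (f (1+T1) q) p + dist p (f (-T2) q) :=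
            dist_triangle _ _ _
        _ < ε := by rw [dist_comm p]; linarith
    · refine ⟨le_max_left _ _, ?_⟩
      norm_num
      rw [hf_add (-T2) T2 q, show T2 + -T2 = (0:ℝ) by ring, hf_zero]
      simpa using hε
  · rw [icc13]
    norm_num
    ring

end Chains

section Model
variable {n lam : ℕ}

/-- projection onto the first `lam` (unstable) coordinates -/
def piU (n lam : ℕ) (v : Fin n → ℝ) : Fin n → ℝ := fun i => if (i : ℕ) < lam then v i else 0
/-- projection onto the last (stable) coordinates -/
def piS (n lam : ℕ) (v : Fin n → ℝ) : Fin n → ℝ := fun i => if (i : ℕ) < lam then 0 else v i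

lemma two_rpow_pos (t : ℝ) : 0 < (2:ℝ) ^ t := Real.rpow_pos_of_pos two_pos t

lemma two_rpow_neg_le_one {t : ℝ} (ht : 0 ≤ t) : (2:ℝ) ^ (-t) ≤ 1 :=
  Real.rpow_le_one_of_one_le_of_nonpos one_le_two (by linarith)

lemma two_rpow_neg_lt_one {t : ℝ} (ht : 0 < t) : (2:ℝ) ^ (-t) < 1 :=
  Real.rpow_lt_one_of_one_lt_of_neg one_lt_two (by linarith)

lemma two_rpow_neg_tendsto : Tendsto (fun t : ℝ => (2:ℝ) ^ (-t)) atTop (𝓝 0) := by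
  have h := tendsto_rpow_atTop_of_base_lt_one (2⁻¹ : ℝ) (by norm_num) (by norm_num)
  refine h.congr (fun t => ?_)
  rw [Real.inv_rpow (by norm_num : (0:ℝ) ≤ 2), ← Real.rpow_neg (by norm_num : (0:ℝ) ≤ 2)]

lemma continuous_piS : Continuous (piS n lam) := by
  refine continuous_pi (fun i => ?_)
  by_cases hi : (i : ℕ) < lam
  · simp only [piS, if_pos hi]; exact continuous_const
  · simp only [piS, if_neg hi]; exact continuous_apply i

lemma continuous_piU : Continuous (piU n lam) := by
  refine continuous_pi (fun i => ?_)
  by_cases hi : (i : ℕ) < lam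
  · simp only [piU, if_pos hi]; exact continuous_apply i
  · simp only [piU, if_neg hi]; exact continuous_const

lemma norm_piS_le (v : Fin n → ℝ) : ‖piS n lam v‖ ≤ ‖v‖ := by
  rw [pi_norm_le_iff_of_nonneg (norm_nonneg v)]
  intro i
  by_cases hi : (i : ℕ) < lam
  · simp only [piS, if_pos hi, norm_zero]; exact (norm_nonneg v)
  · simp only [piS, if_neg hi]; exact norm_le_pi_norm v i

lemma norm_piU_le (v : Fin n → ℝ) : ‖piU n lam v‖ ≤ ‖v‖ := by
  rw [pi_norm_le_iff_of_nonneg (norm_nonneg v)]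
  intro i
  by_cases hi : (i : ℕ) < lam
  · simp only [piU, if_pos hi]; exact norm_le_pi_norm v i
  · simp only [piU, if_neg hi, norm_zero]; exact (norm_nonneg v)

lemma piS_modelFlow (t : ℝ) (v : Fin n → ℝ) :
    piS n lam (modelFlow n lam t v) = (2:ℝ) ^ (-t) • piS n lam v := by
  funext i
  by_cases hi : (i : ℕ) < lam
  · simp [piS, if_pos hi]
  · simp [piS, modelFlow, if_neg hi]

lemma piU_modelFlow (t : ℝ) (v : Fin n → ℝ) :
    piU n lam (modelFlow n lam t v) = (2:ℝ) ^ t • piU n lam v := by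
  funext i
  by_cases hi : (i : ℕ) < lam
  · simp [piU, modelFlow, if_pos hi]
  · simp [piU, if_neg hi]

lemma norm_piS_modelFlow (t : ℝ) (v : Fin n → ℝ) :
    ‖piS n lam (modelFlow n lam t v)‖ = (2:ℝ) ^ (-t) * ‖piS n lam v‖ := by
  rw [piS_modelFlow, norm_smul, Real.norm_eq_abs, abs_of_pos (two_rpow_pos _)]

lemma norm_piU_modelFlow (t : ℝ) (v : Fin n → ℝ) :
    ‖piU n lam (modelFlow n lam t v)‖ = (2:ℝ) ^ t * ‖piU n lam v‖ := by
  rw [piU_modelFlow, norm_smul, Real.norm_eq_abs, abs_of_pos (two_rpow_pos _)]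

lemma modelFlow_of_piU_zero {v : Fin n → ℝ} (h : piU n lam v = 0) (t : ℝ) :
    modelFlow n lam t v = (2:ℝ) ^ (-t) • v := by
  funext i
  by_cases hi : (i : ℕ) < lam
  · have : v i = 0 := by
      have := congrFun h i
      simpa [piU, if_pos hi] using this
    simp [modelFlow, if_pos hi, this]
  · simp [modelFlow, if_neg hi]

lemma modelFlow_of_piS_zero {v : Fin n → ℝ} (h : piS n lam v = 0) (t : ℝ) :
    modelFlow n lam (-t) v = (2:ℝ) ^ (-t) • v := by
  funext i
  by_cases hi : (i : ℕ) < lam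
  · simp [modelFlow, if_pos hi]
  · have : v i = 0 := by
      have := congrFun h i
      simpa [piS, if_neg hi] using this
    simp [modelFlow, if_neg hi, this]

/-- bound for the backward model flow up to the exit time -/
lemma norm_modelFlow_neg_le {v : Fin n → ℝ} {r s τ : ℝ} (hr : 0 ≤ r)
    (hv : ‖v‖ ≤ r) (hs0 : 0 ≤ s) (hsτ : s ≤ τ)
    (hτ : (2:ℝ) ^ τ * ‖piS n lam v‖ ≤ r) :
    ‖modelFlow n lam (-s) v‖ ≤ r := by
  rw [pi_norm_le_iff_of_nonneg hr]
  intro i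
  by_cases hi : (i : ℕ) < lam
  · simp only [modelFlow, if_pos hi, norm_mul, Real.norm_eq_abs,
      abs_of_pos (two_rpow_pos _)]
    calc (2:ℝ) ^ (-s) * |v i| ≤ 1 * |v i| := by
          apply mul_le_mul_of_nonneg_right (two_rpow_neg_le_one hs0) (abs_nonneg _)
      _ = |v i| := one_mul _
      _ ≤ ‖v‖ := by rw [← Real.norm_eq_abs]; exact norm_le_pi_norm v i
      _ ≤ r := hv
  · simp only [modelFlow, if_neg hi, neg_neg, norm_mul, Real.norm_eq_abs,
      abs_of_pos (two_rpow_pos _)]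
    have h1 : |v i| ≤ ‖piS n lam v‖ := by
      have : piS n lam v i = v i := by simp [piS, if_neg hi]
      rw [← Real.norm_eq_abs, ← this]
      exact norm_le_pi_norm (piS n lam v) i
    calc (2:ℝ) ^ s * |v i| ≤ (2:ℝ) ^ τ * ‖piS n lam v‖ := by
          apply mul_le_mul
          · exact (Real.rpow_le_rpow_left_iff one_lt_two).2 hsτ
          · exact h1
          · exact abs_nonneg _
          · exact le_of_lt (two_rpow_pos _)
      _ ≤ r := hτ

/-- strict bound strictly before the exit time -/
lemma norm_modelFlow_neg_lt {v : Fin n → ℝ} {r s τ : ℝ} (hr : 0 < r)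
    (hv : ‖v‖ ≤ r) (hs0 : 0 < s) (hsτ : s < τ)
    (hτ : (2:ℝ) ^ τ * ‖piS n lam v‖ ≤ r) :
    ‖modelFlow n lam (-s) v‖ < r := by
  rw [pi_norm_lt_iff hr]
  intro i
  by_cases hi : (i : ℕ) < lam
  · simp only [modelFlow, if_pos hi, norm_mul, Real.norm_eq_abs,
      abs_of_pos (two_rpow_pos _)]
    calc (2:ℝ) ^ (-s) * |v i| ≤ (2:ℝ) ^ (-s) * r := by
          apply mul_le_mul_of_nonneg_left _ (le_of_lt (two_rpow_pos _))
          rw [← Real.norm_eq_abs]; exact le_trans (norm_le_pi_norm v i) hv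
      _ < 1 * r := by
          apply mul_lt_mul_of_pos_right (two_rpow_neg_lt_one hs0) hr
      _ = r := one_mul r
  · simp only [modelFlow, if_neg hi, neg_neg, norm_mul, Real.norm_eq_abs,
      abs_of_pos (two_rpow_pos _)]
    have h1 : |v i| ≤ ‖piS n lam v‖ := by
      have : piS n lam v i = v i := by simp [piS, if_neg hi]
      rw [← Real.norm_eq_abs, ← this]
      exact norm_le_pi_norm (piS n lam v) i
    rcases eq_or_lt_of_le (le_trans (abs_nonneg (v i)) h1) with h2 | h2
    · calc (2:ℝ) ^ s * |v i| ≤ (2:ℝ) ^ s * ‖piS n lam v‖ :=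
            mul_le_mul_of_nonneg_left h1 (le_of_lt (two_rpow_pos _))
        _ = 0 := by rw [← h2, mul_zero]
        _ < r := hr
    · calc (2:ℝ) ^ s * |v i| ≤ (2:ℝ) ^ s * ‖piS n lam v‖ :=
            mul_le_mul_of_nonneg_left h1 (le_of_lt (two_rpow_pos _))
        _ < (2:ℝ) ^ τ * ‖piS n lam v‖ :=
            mul_lt_mul_of_pos_right ((Real.rpow_lt_rpow_left_iff one_lt_two).2 hsτ) h2
        _ ≤ r := hτ

end Model

lemma modelFlow_zero {n lam : ℕ} (v : Fin n → ℝ) : modelFlow n lam 0 v = v := by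
  funext i
  by_cases hi : (i : ℕ) < lam <;> simp [modelFlow, hi]

section Box
variable {M : Type*} [MetricSpace M] [CompactSpace M]
variable {n lam : ℕ} {U : Set M}

/-- the compact "box" of radius `r` around the fixed point, in chart coordinates -/
def boxSet (h : U ≃ₜ (Fin n → ℝ)) (r : ℝ) : Set M :=
  Subtype.val '' (h.symm '' Metric.closedBall 0 r)

def oboxSet (h : U ≃ₜ (Fin n → ℝ)) (r : ℝ) : Set M :=
  Subtype.val '' (h.symm '' Metric.ball 0 r)

lemma mem_boxSet {h : U ≃ₜ (Fin n → ℝ)} {r : ℝ} {y : M} :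
    y ∈ boxSet h r ↔ ∃ hy : y ∈ U, ‖(h ⟨y, hy⟩ : Fin n → ℝ)‖ ≤ r := by
  constructor
  · rintro ⟨u, ⟨w, hw, rfl⟩, rfl⟩
    refine ⟨(h.symm w).2, ?_⟩
    have : (⟨(h.symm w).1, (h.symm w).2⟩ : U) = h.symm w := rfl
    rw [this, h.apply_symm_apply]
    exact mem_closedBall_zero_iff.1 hw
  · rintro ⟨hy, hnorm⟩
    exact ⟨⟨y, hy⟩, ⟨h ⟨y, hy⟩, mem_closedBall_zero_iff.2 hnorm, h.symm_apply_apply _⟩, rfl⟩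

lemma mem_oboxSet {h : U ≃ₜ (Fin n → ℝ)} {r : ℝ} {y : M} :
    y ∈ oboxSet h r ↔ ∃ hy : y ∈ U, ‖(h ⟨y, hy⟩ : Fin n → ℝ)‖ < r := by
  constructor
  · rintro ⟨u, ⟨w, hw, rfl⟩, rfl⟩
    refine ⟨(h.symm w).2, ?_⟩
    have : (⟨(h.symm w).1, (h.symm w).2⟩ : U) = h.symm w := rfl
    rw [this, h.apply_symm_apply]
    exact mem_ball_zero_iff.1 hw
  · rintro ⟨hy, hnorm⟩
    exact ⟨⟨y, hy⟩, ⟨h ⟨y, hy⟩, mem_ball_zero_iff.2 hnorm, h.symm_apply_apply _⟩, rfl⟩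

lemma boxSet_subset_U {h : U ≃ₜ (Fin n → ℝ)} {r : ℝ} : boxSet h r ⊆ U := by
  intro y hy
  obtain ⟨hyU, -⟩ := mem_boxSet.1 hy
  exact hyU

lemma oboxSet_subset_boxSet {h : U ≃ₜ (Fin n → ℝ)} {r : ℝ} : oboxSet h r ⊆ boxSet h r := by
  intro y hy
  obtain ⟨hyU, hn⟩ := mem_oboxSet.1 hy
  exact mem_boxSet.2 ⟨hyU, le_of_lt hn⟩

lemma isCompact_boxSet {h : U ≃ₜ (Fin n → ℝ)} {r : ℝ} : IsCompact (boxSet h r) := by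
  have : boxSet h r = (fun w => (↑(h.symm w) : M)) '' Metric.closedBall 0 r := by
    rw [boxSet, Set.image_image]
  rw [this]
  exact (isCompact_closedBall 0 r).image (continuous_subtype_val.comp h.symm.continuous)

lemma isClosed_boxSet {h : U ≃ₜ (Fin n → ℝ)} {r : ℝ} : IsClosed (boxSet h r) :=
  isCompact_boxSet.isClosed

lemma isOpen_oboxSet (hU : IsOpen U) {h : U ≃ₜ (Fin n → ℝ)} {r : ℝ} :
    IsOpen (oboxSet h r) :=
  hU.isOpenMap_subtype_val _ (h.symm.isOpenMap _ Metric.isOpen_ball)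

/-- A continuous curve starting in a closed set `K` which, as long as it has remained in
`K`, is actually in an "interior" open subset `O ⊆ K` at every time strictly inside the
interval, cannot leave `K` during `[0, τ]`. -/
lemma stay_in_closed {K O : Set M} (hK : IsClosed K) (hO : IsOpen O) (hOK : O ⊆ K)
    {c : ℝ → M} (hc : Continuous c)
    {ε : ℝ} (hε : 0 < ε) (hstart : ∀ s ∈ Icc (0:ℝ) ε, c s ∈ K)
    {τ : ℝ} (hτ : 0 < τ)
    (hint : ∀ t, 0 < t → t < τ → (∀ s ∈ Icc (0:ℝ) t, c s ∈ K) → c t ∈ O) :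
    ∀ s ∈ Icc (0:ℝ) τ, c s ∈ K := by
  by_contra hcon
  push_neg at hcon
  obtain ⟨s₀, hs₀I, hs₀K⟩ := hcon
  set bad : Set ℝ := {t | 0 < t ∧ t ≤ τ ∧ c t ∉ K} with hbad
  have hc0K : c 0 ∈ K := hstart 0 ⟨le_refl 0, le_of_lt hε⟩
  have hs₀pos : 0 < s₀ := by
    rcases eq_or_lt_of_le hs₀I.1 with h | h
    · exfalso; rw [← h] at hs₀K; exact hs₀K hc0K
    · exact h
  have hbadne : bad.Nonempty := ⟨s₀, hs₀pos, hs₀I.2, hs₀K⟩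
  have hbdd : BddBelow bad := ⟨0, fun t ht => le_of_lt ht.1⟩
  have hεlow : ∀ t ∈ bad, ε < t := by
    intro t ht
    by_contra hle
    push_neg at hle
    exact ht.2.2 (hstart t ⟨le_of_lt ht.1, hle⟩)
  set t0 : ℝ := sInf bad with ht0
  have ht0ge : ε ≤ t0 := le_csInf hbadne (fun t ht => le_of_lt (hεlow t ht))
  have ht0pos : 0 < t0 := lt_of_lt_of_le hε ht0ge
  have ht0le : t0 ≤ τ := csInf_le hbdd hbadne.choose_spec |>.trans hbadne.choose_spec.2.1
  have hgood : ∀ s, 0 ≤ s → s < t0 → c s ∈ K := by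
    intro s hs0 hst
    rcases eq_or_lt_of_le hs0 with h | h
    · rw [← h]; exact hc0K
    · by_contra hcK
      have : s ∈ bad := ⟨h, le_trans (le_of_lt hst) ht0le, hcK⟩
      exact absurd (csInf_le hbdd this) (not_le.2 hst)
  have hK0 : c t0 ∈ K := by
    have hseq : Tendsto (fun j : ℕ => t0 - t0 / (j + 1)) atTop (𝓝 t0) := by
      have h1 : Tendsto (fun j : ℕ => t0 / (j + 1)) atTop (𝓝 0) := by
        have := tendsto_one_div_add_atTop_nhds_zero_nat.const_mul t0
        simpa [div_eq_mul_inv, mul_comm, one_div, mul_one_div] using this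
      have := h1.const_sub t0
      simpa using this
    have hmem : ∀ j : ℕ, c (t0 - t0 / (j + 1)) ∈ K := by
      intro j
      apply hgood
      · have hdiv : t0 / ((j:ℝ) + 1) ≤ t0 := by
          apply div_le_self (le_of_lt ht0pos)
          have : (0:ℝ) ≤ j := Nat.cast_nonneg j
          linarith
        linarith
      · have : 0 < t0 / ((j:ℝ) + 1) := by
          apply div_pos ht0pos
          have : (0:ℝ) ≤ j := Nat.cast_nonneg j
          linarith
        linarith
    exact hK.mem_of_tendsto ((hc.tendsto t0).comp hseq) (Eventually.of_forall hmem)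
  rcases eq_or_lt_of_le ht0le with heq | hlt
  · -- t0 = τ : bad ⊆ {τ} but c τ ∈ K
    obtain ⟨tb, htb⟩ := hbadne
    have h1 : t0 ≤ tb := csInf_le hbdd htb
    have h2 : tb ≤ τ := htb.2.1
    have : tb = t0 := le_antisymm (heq ▸ h2) h1
    rw [this] at htb
    exact htb.2.2 hK0
  · -- t0 < τ : c t0 ∈ O, contradiction with inf approximation
    have hseg : ∀ s ∈ Icc (0:ℝ) t0, c s ∈ K := by
      intro s hs
      rcases eq_or_lt_of_le hs.2 with h | h
      · rw [h]; exact hK0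
      · exact hgood s hs.1 h
    have hO0 : c t0 ∈ O := hint t0 ht0pos hlt hseg
    have hopen : IsOpen (c ⁻¹' O) := hO.preimage hc
    rw [Metric.isOpen_iff] at hopen
    obtain ⟨η, hη, hball⟩ := hopen t0 hO0
    obtain ⟨tb, htbbad, htblt⟩ : ∃ tb ∈ bad, tb < t0 + η := by
      by_contra hno
      push_neg at hno
      have hh : t0 + η ≤ t0 := le_csInf hbadne hno
      linarith
    have htbge : t0 ≤ tb := csInf_le hbdd htbbad
    have : tb ∈ Metric.ball t0 η := by
      rw [Metric.mem_ball, Real.dist_eq, abs_of_nonneg (by linarith)]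
      linarith
    exact htbbad.2.2 (hOK (hball this))
end Box

section Keys
variable {M : Type*} [MetricSpace M] [CompactSpace M]
variable {n lam : ℕ} {U : Set M} {f : ℝ → M → M} {p : M}

lemma conj_fwd (h : U ≃ₜ (Fin n → ℝ))
    (hconj : ∀ (t : ℝ) (y : M) (hy : y ∈ U) (hfy : ∀ s ∈ Set.uIcc (0 : ℝ) t, f s y ∈ U),
      (h ⟨f t y, hfy t Set.right_mem_uIcc⟩ : Fin n → ℝ) = modelFlow n lam t (h ⟨y, hy⟩))
    {t : ℝ} (ht : 0 ≤ t) {y : M} (hy : y ∈ U)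
    (hseg : ∀ s ∈ Icc (0:ℝ) t, f s y ∈ U) (hm : f t y ∈ U) :
    (h ⟨f t y, hm⟩ : Fin n → ℝ) = modelFlow n lam t (h ⟨y, hy⟩) := by
  have hseg' : ∀ s ∈ Set.uIcc (0:ℝ) t, f s y ∈ U := by rwa [Set.uIcc_of_le ht]
  exact hconj t y hy hseg'

lemma conj_bwd (h : U ≃ₜ (Fin n → ℝ))
    (hconj : ∀ (t : ℝ) (y : M) (hy : y ∈ U) (hfy : ∀ s ∈ Set.uIcc (0 : ℝ) t, f s y ∈ U),
      (h ⟨f t y, hfy t Set.right_mem_uIcc⟩ : Fin n → ℝ) = modelFlow n lam t (h ⟨y, hy⟩))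
    {t : ℝ} (ht : 0 ≤ t) {y : M} (hy : y ∈ U)
    (hseg : ∀ s ∈ Icc (0:ℝ) t, f (-s) y ∈ U) (hm : f (-t) y ∈ U) :
    (h ⟨f (-t) y, hm⟩ : Fin n → ℝ) = modelFlow n lam (-t) (h ⟨y, hy⟩) := by
  have hseg' : ∀ s ∈ Set.uIcc (0:ℝ) (-t), f s y ∈ U := by
    rw [Set.uIcc_of_ge (by linarith : -t ≤ 0)]
    intro s hs
    have : f (-(-s)) y ∈ U := hseg (-s) ⟨by linarith [hs.2], by linarith [hs.1]⟩
    rwa [neg_neg] at this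
  exact hconj (-t) y hy hseg'

/-- an orbit starting in the box on the local stable manifold stays there and
converges to `p` (stated abstractly so that it applies to time-reversed flows too). -/
lemma abstract_stable (hU : IsOpen U) (hpU : p ∈ U) (h : U ≃ₜ (Fin n → ℝ))
    (h0 : (h ⟨p, hpU⟩ : Fin n → ℝ) = 0) {r : ℝ} (hr : 0 < r)
    (g : ℝ → M → M) (hgc : Continuous fun q : ℝ × M => g q.1 q.2)
    {y : M} (hy : y ∈ U) (hg0 : g 0 y = y)
    (hnorm : ‖(h ⟨y, hy⟩ : Fin n → ℝ)‖ ≤ r)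
    (hgconj : ∀ t, 0 ≤ t → (∀ s ∈ Icc (0:ℝ) t, g s y ∈ U) → ∀ hm : g t y ∈ U,
      (h ⟨g t y, hm⟩ : Fin n → ℝ) = (2:ℝ)^(-t) • (h ⟨y, hy⟩)) :
    Tendsto (fun t => g t y) atTop (𝓝 p) := by
  set v : Fin n → ℝ := h ⟨y, hy⟩ with hv
  have hcurve : Continuous (fun s : ℝ => g s y) :=
    hgc.comp (continuous_id.prodMk continuous_const)
  -- start: a short initial segment stays in the box
  have hW : IsOpen {s : ℝ | g s y ∈ U} := hU.preimage hcurve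
  have h0W : (0:ℝ) ∈ {s : ℝ | g s y ∈ U} := by rw [mem_setOf_eq, hg0]; exact hy
  obtain ⟨η, hη, hball⟩ := Metric.isOpen_iff.1 hW 0 h0W
  have hstart : ∀ s ∈ Icc (0:ℝ) (η/2), g s y ∈ boxSet h r := by
    intro s hs
    have hsegU : ∀ u ∈ Icc (0:ℝ) s, g u y ∈ U := by
      intro u hu
      apply hball
      rw [Metric.mem_ball, Real.dist_eq, sub_zero, abs_of_nonneg hu.1]
      linarith [hu.2, hs.2]
    have hm : g s y ∈ U := hsegU s ⟨hs.1, le_refl s⟩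
    rw [mem_boxSet]
    refine ⟨hm, ?_⟩
    rw [hgconj s hs.1 hsegU hm, norm_smul, Real.norm_eq_abs,
      abs_of_pos (two_rpow_pos _)]
    calc (2:ℝ)^(-s) * ‖v‖ ≤ 1 * ‖v‖ :=
          mul_le_mul_of_nonneg_right (two_rpow_neg_le_one hs.1) (norm_nonneg v)
      _ = ‖v‖ := one_mul _
      _ ≤ r := hnorm
  -- all nonnegative times stay in the box
  have hbox : ∀ t, 0 ≤ t → g t y ∈ boxSet h r := by
    intro t ht
    rcases eq_or_lt_of_le ht with h' | h'
    · rw [← h', hg0]; exact mem_boxSet.2 ⟨hy, hnorm⟩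
    · have := stay_in_closed (K := boxSet h r) (O := oboxSet h r) isClosed_boxSet
        (isOpen_oboxSet hU) oboxSet_subset_boxSet hcurve (by linarith : (0:ℝ) < η/2)
        hstart h' ?_
      · exact this t ⟨ht, le_refl t⟩
      · intro u hu0 _ hseg
        have hsegU : ∀ s ∈ Icc (0:ℝ) u, g s y ∈ U := fun s hs => boxSet_subset_U (hseg s hs)
        have hm : g u y ∈ U := hsegU u ⟨le_of_lt hu0, le_refl u⟩
        rw [mem_oboxSet]
        refine ⟨hm, ?_⟩
        rw [hgconj u (le_of_lt hu0) hsegU hm, norm_smul, Real.norm_eq_abs,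
          abs_of_pos (two_rpow_pos _)]
        calc (2:ℝ)^(-u) * ‖v‖ ≤ (2:ℝ)^(-u) * r :=
              mul_le_mul_of_nonneg_left hnorm (le_of_lt (two_rpow_pos _))
          _ < 1 * r := mul_lt_mul_of_pos_right (two_rpow_neg_lt_one hu0) hr
          _ = r := one_mul r
  -- identify the orbit with the model orbit and conclude convergence
  have hrep : ∀ t, 0 ≤ t → g t y = (↑(h.symm ((2:ℝ)^(-t) • v)) : M) := by
    intro t ht
    have hm : g t y ∈ U := boxSet_subset_U (hbox t ht)
    have hsegU : ∀ s ∈ Icc (0:ℝ) t, g s y ∈ U := fun s hs =>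
      boxSet_subset_U (hbox s hs.1)
    have := hgconj t ht hsegU hm
    have h2 : (⟨g t y, hm⟩ : U) = h.symm ((2:ℝ)^(-t) • v) := by
      rw [← this, h.symm_apply_apply]
    exact congrArg Subtype.val h2
  have hlim : Tendsto (fun t : ℝ => (↑(h.symm ((2:ℝ)^(-t) • v)) : M)) atTop (𝓝 p) := by
    have h1 : Tendsto (fun t : ℝ => (2:ℝ)^(-t) • v) atTop (𝓝 ((0:ℝ) • v)) :=
      two_rpow_neg_tendsto.smul_const v
    rw [zero_smul] at h1
    have h2 : Tendsto (fun t : ℝ => h.symm ((2:ℝ)^(-t) • v)) atTop (𝓝 (h.symm 0)) :=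
      (h.symm.continuous.tendsto 0).comp h1
    have h3 : h.symm 0 = ⟨p, hpU⟩ := by rw [← h0, h.symm_apply_apply]
    rw [h3] at h2
    exact (continuous_subtype_val.tendsto _).comp h2
  exact hlim.congr' (by filter_upwards [eventually_ge_atTop (0:ℝ)] with t ht using (hrep t ht).symm)

/-- the backward exit lemma: the backward orbit follows the model flow until the exit
time `τ` from the box. -/
lemma exit_lemma (hU : IsOpen U) (h : U ≃ₜ (Fin n → ℝ))
    (hf_cont : Continuous fun q : ℝ × M => f q.1 q.2) (hf_zero : ∀ x, f 0 x = x)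
    (hconj : ∀ (t : ℝ) (y : M) (hy : y ∈ U) (hfy : ∀ s ∈ Set.uIcc (0 : ℝ) t, f s y ∈ U),
      (h ⟨f t y, hfy t Set.right_mem_uIcc⟩ : Fin n → ℝ) = modelFlow n lam t (h ⟨y, hy⟩))
    {r : ℝ} (hr : 0 < r) {y : M} (hy : y ∈ U)
    (hnorm : ‖(h ⟨y, hy⟩ : Fin n → ℝ)‖ ≤ r)
    {τ : ℝ} (hτ0 : 0 ≤ τ) (hτ : (2:ℝ)^τ * ‖piS n lam (h ⟨y, hy⟩)‖ ≤ r) :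
    ∃ hm : f (-τ) y ∈ U, f (-τ) y ∈ boxSet h r ∧
      (h ⟨f (-τ) y, hm⟩ : Fin n → ℝ) = modelFlow n lam (-τ) (h ⟨y, hy⟩) := by
  set v : Fin n → ℝ := h ⟨y, hy⟩ with hv
  have hcurve : Continuous (fun s : ℝ => f (-s) y) :=
    hf_cont.comp ((continuous_neg).prodMk continuous_const)
  have hc0 : f (-(0:ℝ)) y = y := by rw [neg_zero, hf_zero]
  have claim1 : ∀ s ∈ Icc (0:ℝ) τ, f (-s) y ∈ boxSet h r := by
    rcases eq_or_lt_of_le hτ0 with h' | h'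
    · intro s hs
      have : s = 0 := le_antisymm (h' ▸ hs.2) hs.1
      rw [this, hc0]
      exact mem_boxSet.2 ⟨hy, hnorm⟩
    · -- positive exit time: use the stay lemma
      have hW : IsOpen {s : ℝ | f (-s) y ∈ U} := hU.preimage hcurve
      have h0W : (0:ℝ) ∈ {s : ℝ | f (-s) y ∈ U} := by rw [mem_setOf_eq, hc0]; exact hy
      obtain ⟨η, hη, hball⟩ := Metric.isOpen_iff.1 hW 0 h0W
      set ε : ℝ := min (η/2) τ with hε
      have hεpos : 0 < ε := lt_min (by linarith) h'
      have hstart : ∀ s ∈ Icc (0:ℝ) ε, f (-s) y ∈ boxSet h r := by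
        intro s hs
        have hsegU : ∀ u ∈ Icc (0:ℝ) s, f (-u) y ∈ U := by
          intro u hu
          apply hball
          rw [Metric.mem_ball, Real.dist_eq, sub_zero, abs_of_nonneg hu.1]
          have : s ≤ η/2 := le_trans hs.2 (min_le_left _ _)
          linarith [hu.2]
        have hm : f (-s) y ∈ U := hsegU s ⟨hs.1, le_refl s⟩
        rw [mem_boxSet]
        refine ⟨hm, ?_⟩
        rw [conj_bwd h hconj hs.1 hy hsegU hm]
        exact norm_modelFlow_neg_le (le_of_lt hr) hnorm hs.1
          (le_trans hs.2 (min_le_right _ _)) hτ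
      have := stay_in_closed (K := boxSet h r) (O := oboxSet h r) isClosed_boxSet
        (isOpen_oboxSet hU) oboxSet_subset_boxSet hcurve hεpos hstart h' ?_
      · exact this
      · intro u hu0 huτ hseg
        have hsegU : ∀ s ∈ Icc (0:ℝ) u, f (-s) y ∈ U := fun s hs =>
          boxSet_subset_U (hseg s hs)
        have hm : f (-u) y ∈ U := hsegU u ⟨le_of_lt hu0, le_refl u⟩
        rw [mem_oboxSet]
        refine ⟨hm, ?_⟩
        rw [conj_bwd h hconj (le_of_lt hu0) hy hsegU hm]
        exact norm_modelFlow_neg_lt hr hnorm hu0 huτ hτ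
  have hm : f (-τ) y ∈ U := boxSet_subset_U (claim1 τ ⟨hτ0, le_refl τ⟩)
  have hsegU : ∀ s ∈ Icc (0:ℝ) τ, f (-s) y ∈ U := fun s hs =>
    boxSet_subset_U (claim1 s hs)
  exact ⟨hm, claim1 τ ⟨hτ0, le_refl τ⟩, conj_bwd h hconj hτ0 hy hsegU hm⟩

end Keys

section ChartStep
variable {M : Type*} [MetricSpace M] [CompactSpace M] {n : ℕ} {f : ℝ → M → M}

/-- Fundamental step: if `x` is in the closure of an invariant set `S` avoiding
`W^u_p`, and `x ∈ W^u_p`, then the closure of `S` meets `W^s_p \ {p}`. -/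
lemma chart_step (hf_cont : Continuous fun q : ℝ × M => f q.1 q.2)
    (hf_zero : ∀ x, f 0 x = x)
    (hf_add : ∀ s t : ℝ, ∀ x, f t (f s x) = f (t + s) x)
    {p : M} {lam : ℕ} (hhyp : IsTopHyperbolicFixedPt n f p lam)
    {S : Set M} (hS : ∀ t : ℝ, ∀ y ∈ S, f t y ∈ S)
    (hdisj : ∀ y ∈ S, y ∉ unstableSet f p)
    {x : M} (hxcl : x ∈ closure S) (hxu : x ∈ unstableSet f p) :
    ∃ q ∈ closure S, q ∈ stableSet f p ∧ q ≠ p := by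
  classical
  obtain ⟨hlam, hfix, U, hU, hpU, h, h0, hconj⟩ := hhyp
  -- the small box is a neighborhood of p
  have hpO : ∀ r : ℝ, 0 < r → p ∈ oboxSet h r := by
    intro r hr
    exact mem_oboxSet.2 ⟨hpU, by rw [h0]; simpa using hr⟩
  have hOmem : oboxSet h (1/2) ∈ 𝓝 p :=
    (isOpen_oboxSet hU).mem_nhds (hpO _ (by norm_num))
  -- go far back along the orbit of x
  obtain ⟨T0, hT0⟩ := (eventually_atTop).1 (hxu hOmem)
  set T : ℝ := max T0 0 with hTdef
  have hT : ∀ t, T ≤ t → f (-t) x ∈ oboxSet h (1/2) := fun t ht =>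
    hT0 t (le_trans (le_max_left _ _) ht)
  have hTnn : 0 ≤ T := le_max_right _ _
  set x' : M := f (-T) x with hx'def
  obtain ⟨hx'U, hwnorm⟩ := mem_oboxSet.1 (hT T (le_refl T))
  set w : Fin n → ℝ := h ⟨x', hx'U⟩ with hwdef
  -- the backward orbit of x' stays in the box hence w has no stable component
  have horbU : ∀ u : ℝ, 0 ≤ u → f (-u) x' ∈ oboxSet h (1/2) := by
    intro u hu
    rw [hx'def, hf_add (-T) (-u) x, show -u + -T = -(u + T) by ring]
    exact hT (u + T) (by linarith)
  have hpsw : piS n lam w = 0 := by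
    have hkey : ∀ s : ℝ, 0 ≤ s → (2:ℝ)^s * ‖piS n lam w‖ ≤ 1/2 := by
      intro s hs0
      have hseg : ∀ u ∈ Icc (0:ℝ) s, f (-u) x' ∈ U := fun u hu =>
        boxSet_subset_U (oboxSet_subset_boxSet (horbU u hu.1))
      obtain ⟨hmU, hn⟩ := mem_oboxSet.1 (horbU s hs0)
      rw [conj_bwd h hconj hs0 hx'U hseg hmU] at hn
      have h1 : ‖piS n lam (modelFlow n lam (-s) w)‖ ≤ 1/2 :=
        le_trans (norm_piS_le _) (le_of_lt hn)
      rw [norm_piS_modelFlow, neg_neg] at h1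
      exact h1
    by_contra hne
    have hpos : 0 < ‖piS n lam w‖ :=
      lt_of_le_of_ne (norm_nonneg _) (fun hh => hne (norm_eq_zero.1 hh.symm))
    have hle1 : ‖piS n lam w‖ ≤ 1 := by
      have h9 : ‖piS n lam w‖ ≤ ‖w‖ := norm_piS_le (lam := lam) w
      linarith
    set s : ℝ := Real.logb 2 (1 / ‖piS n lam w‖) with hsdef
    have hs0 : 0 ≤ s := Real.logb_nonneg one_lt_two (by
      rw [le_div_iff₀ hpos]; linarith)
    have h2s : (2:ℝ)^s = 1 / ‖piS n lam w‖ :=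
      Real.rpow_logb two_pos (by norm_num) (one_div_pos.2 hpos)
    have := hkey s hs0
    rw [h2s, one_div, inv_mul_cancel₀ (ne_of_gt hpos)] at this
    linarith
  -- a sequence in S approaching x, pushed back time T
  have hsel : ∀ m : ℕ, ∃ y, y ∈ S ∧ f (-T) y ∈ oboxSet h (3/4) ∧
      dist (f (-T) y) x' < 1/(m+1) := by
    intro m
    have hGc : Continuous fun y : M => f (-T) y :=
      hf_cont.comp (continuous_const.prodMk continuous_id)
    have hVo : IsOpen ((fun y : M => f (-T) y) ⁻¹'
        (oboxSet h (3/4) ∩ Metric.ball x' (1/(m+1)))) :=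
      ((isOpen_oboxSet hU).inter Metric.isOpen_ball).preimage hGc
    have hxV : x ∈ (fun y : M => f (-T) y) ⁻¹'
        (oboxSet h (3/4) ∩ Metric.ball x' (1/(m+1))) := by
      refine ⟨mem_oboxSet.2 ⟨hx'U, by show ‖w‖ < (3:ℝ)/4; linarith⟩, ?_⟩
      show dist (f (-T) x) x' < 1/(m+1)
      rw [hx'def, dist_self]
      positivity
    obtain ⟨y, hy1, hy2⟩ := _root_.mem_closure_iff.1 hxcl _ hVo hxV
    exact ⟨y, hy2, hy1.1, by simpa [Metric.mem_ball] using hy1.2⟩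
  choose y yS hobox hdist using hsel
  set z : ℕ → M := fun m => f (-T) (y m) with hzdef
  have hzU : ∀ m, z m ∈ U := fun m => boxSet_subset_U (oboxSet_subset_boxSet (hobox m))
  set v : ℕ → (Fin n → ℝ) := fun m => h ⟨z m, hzU m⟩ with hvdef
  have hvnorm : ∀ m, ‖v m‖ < 3/4 := by
    intro m
    obtain ⟨hm1, hm2⟩ := mem_oboxSet.1 (hobox m)
    exact hm2
  -- z m → x' and hence v m → w
  have hztend : Tendsto z atTop (𝓝 x') := by
    rw [tendsto_iff_dist_tendsto_zero]
    apply squeeze_zero (fun m => dist_nonneg) (fun m => le_of_lt (hdist m))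
    exact tendsto_one_div_add_atTop_nhds_zero_nat
  have hvtend : Tendsto v atTop (𝓝 w) := by
    have hsub : Tendsto (fun m => (⟨z m, hzU m⟩ : U)) atTop (𝓝 ⟨x', hx'U⟩) := by
      rw [IsEmbedding.subtypeVal.tendsto_nhds_iff]
      exact hztend
    exact (h.continuous.tendsto _).comp hsub
  -- stable components are nonzero but tend to zero
  have hspos : ∀ m, 0 < ‖piS n lam (v m)‖ := by
    intro m
    rcases lt_or_eq_of_le (norm_nonneg (piS n lam (v m))) with h' | h'
    · exact h'
    · exfalso
      have hps : piS n lam (v m) = 0 := norm_eq_zero.1 h'.symm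
      have : Tendsto (fun t => f (-t) (z m)) atTop (𝓝 p) := by
        apply abstract_stable hU hpU h h0 one_pos (fun t q => f (-t) q)
          (hf_cont.comp ((continuous_fst.neg).prodMk continuous_snd))
          (hzU m) (by show f (-(0:ℝ)) (z m) = z m; rw [neg_zero, hf_zero])
          (by show ‖v m‖ ≤ 1; linarith [hvnorm m])
        intro t ht hseg hm
        rw [conj_bwd h hconj ht (hzU m) hseg hm]
        show modelFlow n lam (-t) (v m) = (2:ℝ)^(-t) • (v m)
        exact modelFlow_of_piS_zero hps t
      exact hdisj (z m) (hS (-T) (y m) (yS m)) this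
  have hstend : Tendsto (fun m => ‖piS n lam (v m)‖) atTop (𝓝 0) := by
    have h1 : Tendsto (fun m => ‖piS n lam (v m)‖) atTop (𝓝 ‖piS n lam w‖) :=
      ((continuous_norm.comp continuous_piS).tendsto _).comp hvtend
    rwa [hpsw, norm_zero] at h1
  -- exit times
  set τ : ℕ → ℝ := fun m => Real.logb 2 (1 / ‖piS n lam (v m)‖) with hτdef
  have hτ0 : ∀ m, 0 ≤ τ m := by
    intro m
    apply Real.logb_nonneg one_lt_two
    rw [le_div_iff₀ (hspos m)]
    have h9 : ‖piS n lam (v m)‖ ≤ ‖v m‖ := norm_piS_le (lam := lam) (v m)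
    linarith [hvnorm m]
  have hτprod : ∀ m, (2:ℝ)^(τ m) * ‖piS n lam (v m)‖ = 1 := by
    intro m
    have h2s : (2:ℝ)^(τ m) = 1 / ‖piS n lam (v m)‖ :=
      Real.rpow_logb two_pos (by norm_num) (one_div_pos.2 (hspos m))
    rw [h2s, one_div, inv_mul_cancel₀ (ne_of_gt (hspos m))]
  have hτtop : Tendsto τ atTop atTop := by
    apply (Real.tendsto_logb_atTop one_lt_two).comp
    have : Tendsto (fun m => ‖piS n lam (v m)‖) atTop (𝓝[>] 0) := by
      rw [tendsto_nhdsWithin_iff]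
      exact ⟨hstend, Eventually.of_forall (fun m => hspos m)⟩
    simpa [one_div, Pi.inv_def] using this.inv_tendsto_nhdsGT_zero
  -- exit points
  have hexit := fun m => exit_lemma hU h hf_cont hf_zero hconj one_pos (hzU m)
    (le_of_lt (by linarith [hvnorm m] : ‖(h ⟨z m, hzU m⟩ : Fin n → ℝ)‖ < 1))
    (hτ0 m) (le_of_eq (hτprod m))
  choose hme hebox hecoord using hexit
  set e : ℕ → M := fun m => f (-(τ m)) (z m) with hedef
  have heS : ∀ m, e m ∈ S := fun m => hS _ _ (hS _ _ (yS m))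
  -- a convergent subsequence of exit points
  obtain ⟨q, hqbox, φ, hφmono, hφconv⟩ :=
    isCompact_boxSet.tendsto_subseq (x := e) (fun m => hebox m)
  have hqU : q ∈ U := boxSet_subset_U hqbox
  have hqcl : q ∈ closure S :=
    mem_closure_of_tendsto hφconv (Eventually.of_forall (fun j => heS (φ j)))
  set ξq : Fin n → ℝ := h ⟨q, hqU⟩ with hξqdef
  have hξconv : Tendsto (fun j => modelFlow n lam (-(τ (φ j))) (v (φ j))) atTop (𝓝 ξq) := by
    have hsub : Tendsto (fun j => (⟨e (φ j), hme (φ j)⟩ : U)) atTop (𝓝 ⟨q, hqU⟩) := by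
      rw [IsEmbedding.subtypeVal.tendsto_nhds_iff]
      exact hφconv
    have := (h.continuous.tendsto _).comp hsub
    refine this.congr (fun j => ?_)
    exact hecoord (φ j)
  -- unstable component of the limit vanishes
  have hξuzero : piU n lam ξq = 0 := by
    have h1 : Tendsto (fun j => ‖piU n lam (modelFlow n lam (-(τ (φ j))) (v (φ j)))‖)
        atTop (𝓝 ‖piU n lam ξq‖) :=
      ((continuous_norm.comp continuous_piU).tendsto _).comp hξconv
    have h2 : Tendsto (fun j => ‖piU n lam (modelFlow n lam (-(τ (φ j))) (v (φ j)))‖)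
        atTop (𝓝 0) := by
      apply squeeze_zero (fun j => norm_nonneg _)
        (g := fun j => (2:ℝ)^(-(τ (φ j))))
      · intro j
        rw [norm_piU_modelFlow]
        calc (2:ℝ)^(-(τ (φ j))) * ‖piU n lam (v (φ j))‖
            ≤ (2:ℝ)^(-(τ (φ j))) * 1 := by
              apply mul_le_mul_of_nonneg_left _ (le_of_lt (two_rpow_pos _))
              exact le_trans (norm_piU_le _) (by linarith [hvnorm (φ j)])
          _ = (2:ℝ)^(-(τ (φ j))) := mul_one _
      · exact two_rpow_neg_tendsto.comp (hτtop.comp hφmono.tendsto_atTop)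
    have := tendsto_nhds_unique h1 h2
    exact norm_eq_zero.1 this
  -- stable component of the limit has norm one
  have hξsnorm : ‖piS n lam ξq‖ = 1 := by
    have h1 : Tendsto (fun j => ‖piS n lam (modelFlow n lam (-(τ (φ j))) (v (φ j)))‖)
        atTop (𝓝 ‖piS n lam ξq‖) :=
      ((continuous_norm.comp continuous_piS).tendsto _).comp hξconv
    have h2 : ∀ j, ‖piS n lam (modelFlow n lam (-(τ (φ j))) (v (φ j)))‖ = 1 := by
      intro j
      rw [norm_piS_modelFlow, neg_neg]
      exact hτprod (φ j)
    have h3 : Tendsto (fun j : ℕ => (1:ℝ)) atTop (𝓝 ‖piS n lam ξq‖) := by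
      refine h1.congr (fun j => ?_)
      rw [h2 j]
    exact tendsto_nhds_unique h3 tendsto_const_nhds
  -- conclusion
  have hqne : q ≠ p := by
    intro hqp
    subst hqp
    have : ξq = 0 := by rw [hξqdef]; exact h0
    rw [this] at hξsnorm
    have : piS n lam (0 : Fin n → ℝ) = 0 := by
      funext i; by_cases hi : (i:ℕ) < lam <;> simp [piS, hi]
    rw [this, norm_zero] at hξsnorm
    norm_num at hξsnorm
  have hqstable : q ∈ stableSet f p := by
    have : Tendsto (fun t => f t q) atTop (𝓝 p) := by
      apply abstract_stable hU hpU h h0 one_pos f hf_cont hqU (hf_zero q)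
      · exact (mem_boxSet.1 hqbox).choose_spec
      · intro t ht hseg hm
        rw [conj_fwd h hconj ht hqU hseg hm, ← hξqdef, modelFlow_of_piU_zero hξuzero]
    exact this
  exact ⟨q, hqcl, hqstable, hqne⟩

end ChartStep

section MainLemma
variable {M : Type*} [MetricSpace M] [CompactSpace M] {n : ℕ} {f : ℝ → M → M}

lemma unstable_mem_of_fixed {p : M} (hfix : ∀ t : ℝ, f t p = p) : p ∈ unstableSet f p := by
  rw [unstableSet, mem_setOf_eq]
  have : (fun t : ℝ => f (-t) p) = fun _ => p := funext fun t => hfix (-t)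
  rw [this]
  exact tendsto_const_nhds

lemma unstable_invariant (hf_add : ∀ s t : ℝ, ∀ x, f t (f s x) = f (t + s) x)
    {p y : M} (hy : y ∈ unstableSet f p) (t : ℝ) : f t y ∈ unstableSet f p := by
  rw [unstableSet, mem_setOf_eq]
  have hcomp : Tendsto (fun s : ℝ => s - t) atTop atTop := tendsto_atTop_add_const_right _ _ tendsto_id
  have := hy.comp hcomp
  refine this.congr (fun s => ?_)
  show f (-(s - t)) y = f (-s) (f t y)
  rw [hf_add t (-s) y]
  congr 1
  ring

lemma unstable_disjoint {p q : M} (hpq : p ≠ q) {y : M}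
    (hyp : y ∈ unstableSet f p) (hyq : y ∈ unstableSet f q) : False :=
  hpq (tendsto_nhds_unique hyp hyq)

/-- Main lemma: the unstable-side statement, for an abstract flow. -/
lemma main_unstable
    (hf_cont : Continuous fun q : ℝ × M => f q.1 q.2)
    (hf_zero : ∀ x, f 0 x = x)
    (hf_add : ∀ s t : ℝ, ∀ x, f t (f s x) = f (t + s) x)
    {k : ℕ} {p : Fin k → M} (hp_inj : Function.Injective p)
    (hyp : ∀ l : Fin k, ∃ lam : ℕ, IsTopHyperbolicFixedPt n f (p l) lam)
    (H2 : ∀ x z : M, MapClusterPt z atTop (fun t => f (-t) x) → z ∈ Set.range p)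
    (H3 : ∀ (l : Fin k) (q : M), q ∈ stableSet f (p l) → q ∈ unstableSet f (p l) → q = p l)
    (hp_ord : ∀ i j : Fin k, (stableSet f (p i) ∩ unstableSet f (p j)).Nonempty →
      i ≠ j → i < j) :
    ∀ i : Fin k, closure (unstableSet f (p i)) \ (unstableSet f (p i) ∪ {p i}) ⊆
      ⋃ j : Fin k, ⋃ _ : j < i, unstableSet f (p j) := by
  -- every point has an α-limit among the fixed points
  have αlim : ∀ x : M, ∃ j : Fin k, x ∈ unstableSet f (p j) := by
    intro x
    have hγ : Continuous fun t : ℝ => f (-t) x :=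
      hf_cont.comp ((continuous_neg).prodMk continuous_const)
    obtain ⟨z, hzr, hzt⟩ := curve_tendsto hγ (Set.finite_range p) (H2 x)
    obtain ⟨j, rfl⟩ := hzr
    exact ⟨j, hzt⟩
  -- the inductive claim
  have claim : ∀ (c : ℕ) (l i : Fin k), k - (l : ℕ) ≤ c →
      ∀ x, x ∈ closure (unstableSet f (p i)) → x ∈ unstableSet f (p l) → l ≠ i → l < i := by
    intro c
    induction c with
    | zero =>
      intro l i hle
      exfalso
      have := l.isLt
      omega
    | succ c ih =>
      intro l i hle x hxcl hxu hne
      obtain ⟨lam, hhyp⟩ := hyp l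
      have hfixl : ∀ t : ℝ, f t (p l) = p l := hhyp.2.1
      have hSinv : ∀ t : ℝ, ∀ y ∈ unstableSet f (p i), f t y ∈ unstableSet f (p i) :=
        fun t y hy => unstable_invariant hf_add hy t
      have hdisj : ∀ y ∈ unstableSet f (p i), y ∉ unstableSet f (p l) :=
        fun y hy hy' => unstable_disjoint (fun hpq => hne (hp_inj hpq.symm)) hy hy'
      obtain ⟨q, hqcl, hqs, hqne⟩ := chart_step hf_cont hf_zero hf_add hhyp
        hSinv hdisj hxcl hxu
      obtain ⟨l', hql'⟩ := αlim q
      have hne' : l' ≠ l := by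
        intro hll
        exact hqne (H3 l q hqs (hll ▸ hql'))
      have hll' : l < l' := hp_ord l l' ⟨q, hqs, hql'⟩ (Ne.symm hne')
      by_cases hli : l' = i
      · exact hp_ord l i ⟨q, hqs, hli ▸ hql'⟩ hne
      · have hlt : l' < i := by
          apply ih l' i ?_ q hqcl hql' hli
          · have h1 : (l : ℕ) < (l' : ℕ) := hll'
            omega
        exact lt_trans hll' hlt
  intro i x hx
  obtain ⟨hxcl, hxnot⟩ := hx
  obtain ⟨j, hxj⟩ := αlim x
  have hne : j ≠ i := by
    intro hji
    exact hxnot (Or.inl (hji ▸ hxj))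
  have hji : j < i := claim k j i (by omega) x hxcl hxj hne
  exact Set.mem_iUnion.2 ⟨j, Set.mem_iUnion.2 ⟨hji, hxj⟩⟩

end MainLemma

section Reverse
variable {M : Type*} [MetricSpace M]

/-- a topologically hyperbolic fixed point for `f` is one for the reversed flow. -/
lemma hyperbolic_reverse {n : ℕ} {f : ℝ → M → M} {p : M} {lam : ℕ}
    (hh : IsTopHyperbolicFixedPt n f p lam) :
    ∃ lam' : ℕ, IsTopHyperbolicFixedPt n (fun t x => f (-t) x) p lam' := by
  obtain ⟨hlam, hfix, U, hU, hpU, h, h0, hconj⟩ := hh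
  by_cases hn : n = 0
  · subst hn
    haveI : Subsingleton (Fin 0 → ℝ) := ⟨fun a b => funext fun i => i.elim0⟩
    exact ⟨0, le_refl 0, fun t => hfix (-t), U, hU, hpU, h,
      Subsingleton.elim _ _, fun t y hy hfy => Subsingleton.elim _ _⟩
  · have hn0 : 0 < n := Nat.pos_of_ne_zero hn
    refine ⟨n - lam, Nat.sub_le n lam, fun t => hfix (-t), U, hU, hpU, ?_⟩
    -- the coordinate rotation σ
    have hlv : ∀ i : Fin n, (i : ℕ) + lam < n → (((i:ℕ) + lam) % n) = (i:ℕ) + lam :=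
      fun i hi => Nat.mod_eq_of_lt hi
    set σ : Equiv.Perm (Fin n) :=
      { toFun := fun i => ⟨((i : ℕ) + lam) % n, Nat.mod_lt _ hn0⟩
        invFun := fun i => ⟨((i : ℕ) + (n - lam)) % n, Nat.mod_lt _ hn0⟩
        left_inv := by
          intro i
          apply Fin.ext
          show (((i:ℕ) + lam) % n + (n - lam)) % n = (i:ℕ)
          rw [Nat.mod_add_mod]
          have : (i:ℕ) + lam + (n - lam) = (i:ℕ) + n := by omega
          rw [this, Nat.add_mod_right, Nat.mod_eq_of_lt i.isLt]
        right_inv := by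
          intro i
          apply Fin.ext
          show (((i:ℕ) + (n - lam)) % n + lam) % n = (i:ℕ)
          rw [Nat.mod_add_mod]
          have : (i:ℕ) + (n - lam) + lam = (i:ℕ) + n := by omega
          rw [this, Nat.add_mod_right, Nat.mod_eq_of_lt i.isLt] } with hσdef
    have hσval : ∀ i : Fin n, ((σ i : ℕ)) = ((i:ℕ) + lam) % n := fun i => rfl
    have hkey : ∀ i : Fin n, ((i : ℕ) < n - lam ↔ ¬ ((σ i : ℕ) < lam)) := by
      intro i
      rw [hσval i]
      by_cases hi : (i:ℕ) + lam < n
      · rw [Nat.mod_eq_of_lt hi]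
        constructor
        · intro _; omega
        · intro _; omega
      · have h1 : ((i:ℕ) + lam) % n = (i:ℕ) + lam - n := by
          have h2 : (i:ℕ) + lam - n < n := by have := i.isLt; omega
          conv_lhs => rw [Nat.mod_eq_sub_mod (by omega)]
          exact Nat.mod_eq_of_lt h2
        rw [h1]
        have := i.isLt
        constructor
        · intro hc; omega
        · intro hc; omega
    -- the permuted chart
    set e : (Fin n → ℝ) ≃ₜ (Fin n → ℝ) :=
      { toFun := fun v => v ∘ σ
        invFun := fun v => v ∘ σ.symm
        left_inv := fun v => funext fun i => by
          show v (σ (σ.symm i)) = v i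
          rw [Equiv.apply_symm_apply]
        right_inv := fun v => funext fun i => by
          show v (σ.symm (σ i)) = v i
          rw [Equiv.symm_apply_apply]
        continuous_toFun := continuous_pi fun i => continuous_apply _
        continuous_invFun := continuous_pi fun i => continuous_apply _ } with hedef
    refine ⟨h.trans e, ?_, ?_⟩
    · show e (h ⟨p, hpU⟩) = 0
      rw [h0]
      funext i
      rfl
    · intro t y hy hfy
      have hfy' : ∀ s ∈ Set.uIcc (0:ℝ) (-t), f s y ∈ U := by
        intro s hs
        have h1 : -s ∈ Set.uIcc (0:ℝ) t := by
          have h2 : Set.uIcc (0:ℝ) t = -Set.uIcc (0:ℝ) (-t) := by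
            rw [neg_uIcc, neg_zero, neg_neg]
          rw [h2, Set.mem_neg, neg_neg]
          exact hs
        have := hfy (-s) h1
        show f s y ∈ U
        have h3 : (fun t x => f (-t) x) (-s) y = f s y := by
          show f (-(-s)) y = f s y
          rw [neg_neg]
        rwa [h3] at this
      have hc := hconj (-t) y hy hfy'
      show e (h ⟨f (-t) y, _⟩) = modelFlow n (n - lam) t (e (h ⟨y, hy⟩))
      rw [hc]
      funext i
      show (modelFlow n lam (-t) (h ⟨y, hy⟩)) (σ i) =
        modelFlow n (n - lam) t ((h ⟨y, hy⟩) ∘ σ) i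
      simp only [modelFlow, Function.comp_apply]
      by_cases hi : (i : ℕ) < n - lam
      · have : ¬ ((σ i : ℕ) < lam) := (hkey i).1 hi
        rw [if_neg this, if_pos hi, neg_neg]
      · have : (σ i : ℕ) < lam := by
          by_contra hc2
          exact hi ((hkey i).2 hc2)
        rw [if_pos this, if_neg hi]

end Reverse

/-- With the fixed points enumerated compatibly with the Smale order,
the frontier of each unstable (resp. stable) manifold lies in the union of unstable
(resp. stable) manifolds of earlier (resp. later) fixed points. -/
theorem stmt3 {M : Type*} [MetricSpace M] [CompactSpace M] (n : ℕ)
    (hM : LocallyEuclidean n M)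
    (f : ℝ → M → M)
    (hf_cont : Continuous fun q : ℝ × M => f q.1 q.2)
    (hf_zero : ∀ x, f 0 x = x)
    (hf_add : ∀ s t : ℝ, ∀ x, f t (f s x) = f (t + s) x)
    (R : Set M) (hR : R = {x | IsChainRecurrent f x})
    (hRhyp : ∀ p ∈ R, ∃ lam : ℕ, IsTopHyperbolicFixedPt n f p lam)
    (k : ℕ) (p : Fin k → M)
    (hp_inj : Function.Injective p) (hp_range : Set.range p = R)
    (hp_ord : ∀ i j : Fin k, (stableSet f (p i) ∩ unstableSet f (p j)).Nonempty →
      i ≠ j → i < j) :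
    ∀ i : Fin k,
      (closure (unstableSet f (p i)) \ (unstableSet f (p i) ∪ {p i}) ⊆
        ⋃ j : Fin k, ⋃ _ : j < i, unstableSet f (p j)) ∧
      (closure (stableSet f (p i)) \ (stableSet f (p i) ∪ {p i}) ⊆
        ⋃ j : Fin k, ⋃ _ : i < j, stableSet f (p j)) := by
  classical
  have hmemR : ∀ z : M, IsChainRecurrent f z → z ∈ Set.range p := by
    intro z hz
    rw [hp_range, hR]
    exact hz
  have hyp : ∀ l : Fin k, ∃ lam : ℕ, IsTopHyperbolicFixedPt n f (p l) lam := by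
    intro l
    apply hRhyp (p l)
    rw [← hp_range]
    exact Set.mem_range_self l
  have hfix : ∀ l : Fin k, ∀ t : ℝ, f t (p l) = p l :=
    fun l => (hyp l).choose_spec.2.1
  -- hypotheses for the forward flow
  have H2f : ∀ x z : M, MapClusterPt z atTop (fun t => f (-t) x) → z ∈ Set.range p :=
    fun x z hz => hmemR z (bwd_clusterPt_chainRecurrent hf_cont hf_add hz)
  have H1f : ∀ x z : M, MapClusterPt z atTop (fun t => f t x) → z ∈ Set.range p :=
    fun x z hz => hmemR z (fwd_clusterPt_chainRecurrent hf_cont hf_add hz)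
  have H3f : ∀ (l : Fin k) (q : M),
      q ∈ stableSet f (p l) → q ∈ unstableSet f (p l) → q = p l := by
    intro l q hs hu
    obtain ⟨a, rfl⟩ := hmemR q (homoclinic_chainRecurrent hf_zero hf_add hs hu)
    have hconst : Tendsto (fun t : ℝ => f t (p a)) atTop (𝓝 (p a)) := by
      have : (fun t : ℝ => f t (p a)) = fun _ => p a := funext fun t => hfix a t
      rw [this]
      exact tendsto_const_nhds
    exact tendsto_nhds_unique hconst hs
  have hUnst := main_unstable hf_cont hf_zero hf_add hp_inj hyp H2f H3f hp_ord
  -- the reversed flow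
  set g : ℝ → M → M := fun t x => f (-t) x with hgdef
  have hg_cont : Continuous fun q : ℝ × M => g q.1 q.2 :=
    hf_cont.comp ((continuous_fst.neg).prodMk continuous_snd)
  have hg_zero : ∀ x, g 0 x = x := by
    intro x
    show f (-(0:ℝ)) x = x
    rw [neg_zero]
    exact hf_zero x
  have hg_add : ∀ s t : ℝ, ∀ x, g t (g s x) = g (t + s) x := by
    intro s t x
    show f (-t) (f (-s) x) = f (-(t+s)) x
    rw [hf_add (-s) (-t) x]
    congr 1
    ring
  have hrevuns : ∀ q : M, unstableSet g q = stableSet f q := by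
    intro q
    ext y
    simp only [unstableSet, stableSet, mem_setOf_eq]
    have : (fun t : ℝ => g (-t) y) = fun t : ℝ => f t y := by
      funext t
      show f (-(-t)) y = f t y
      rw [neg_neg]
    rw [this]
  have hrevsta : ∀ q : M, stableSet g q = unstableSet f q := fun q => rfl
  set p' : Fin k → M := fun j => p j.rev with hp'def
  have hp'_inj : Function.Injective p' := fun a b hab => by
    have := hp_inj hab
    have h2 := congrArg Fin.rev this
    rwa [Fin.rev_rev, Fin.rev_rev] at h2
  have hrange' : Set.range p' = Set.range p := by
    ext z
    constructor
    · rintro ⟨j, rfl⟩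
      exact ⟨j.rev, rfl⟩
    · rintro ⟨j, rfl⟩
      exact ⟨j.rev, by show p j.rev.rev = p j; rw [Fin.rev_rev]⟩
  have hyp' : ∀ l : Fin k, ∃ lam : ℕ, IsTopHyperbolicFixedPt n g (p' l) lam := by
    intro l
    obtain ⟨lam, hl⟩ := hyp l.rev
    exact hyperbolic_reverse hl
  have H2g : ∀ x z : M, MapClusterPt z atTop (fun t => g (-t) x) → z ∈ Set.range p' := by
    intro x z hz
    have heq : (fun t : ℝ => g (-t) x) = fun t : ℝ => f t x := by
      funext t
      show f (-(-t)) x = f t x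
      rw [neg_neg]
    rw [heq] at hz
    rw [hrange']
    exact H1f x z hz
  have H3g : ∀ (l : Fin k) (q : M),
      q ∈ stableSet g (p' l) → q ∈ unstableSet g (p' l) → q = p' l := by
    intro l q hs hu
    rw [hrevuns] at hu
    rw [hrevsta] at hs
    exact H3f l.rev q hu hs
  have hp'_ord : ∀ i j : Fin k, (stableSet g (p' i) ∩ unstableSet g (p' j)).Nonempty →
      i ≠ j → i < j := by
    intro i j ⟨q, hq1, hq2⟩ hne
    rw [hrevsta] at hq1
    rw [hrevuns] at hq2
    have hne' : j.rev ≠ i.rev := fun hh => hne (by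
      have := congrArg Fin.rev hh
      rwa [Fin.rev_rev, Fin.rev_rev, eq_comm] at this)
    have := hp_ord j.rev i.rev ⟨q, hq2, hq1⟩ hne'
    exact Fin.rev_lt_rev.1 this
  have hSta := main_unstable hg_cont hg_zero hg_add hp'_inj hyp' H2g H3g hp'_ord
  -- assemble
  intro i
  refine ⟨hUnst i, ?_⟩
  intro x hx
  have e1 : stableSet f (p i) = unstableSet g (p' i.rev) := by
    rw [hrevuns, hp'def]
    show stableSet f (p i) = stableSet f (p i.rev.rev)
    rw [Fin.rev_rev]
  have e2 : p' i.rev = p i := by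
    rw [hp'def]
    show p i.rev.rev = p i
    rw [Fin.rev_rev]
  have hx' : x ∈ closure (unstableSet g (p' i.rev)) \ (unstableSet g (p' i.rev) ∪ {p' i.rev}) := by
    rw [← e1, e2]
    exact hx
  have := hSta i.rev hx'
  rw [Set.mem_iUnion] at this
  obtain ⟨j', hj'⟩ := this
  rw [Set.mem_iUnion] at hj'
  obtain ⟨hj'lt, hxj'⟩ := hj'
  rw [hrevuns] at hxj'
  refine Set.mem_iUnion.2 ⟨j'.rev, Set.mem_iUnion.2 ⟨?_, hxj'⟩⟩
  rw [← Fin.rev_rev j'] at hj'lt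
  exact Fin.rev_lt_rev.1 hj'lt
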